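/- Let Ξ(X) and D(X) be polynomials over ℂ with D(0) ≠ 0, q > 1 a real number, and suppose Ξ(q^{-s})·D(q^{s}) = Ξ(q^{s})·D(q^{-s}) holds for all s ∈ ℂ. If additionally Ξ(0) = c·D(0) for some constant c, and for sufficiently large m the polynomial X^m·D(1/X) (made into a polynomial) is coprime to D(X), then Ξ(X) = c·D(X). -/

import Mathlib

open Polynomial

lemma eval_reverse_aux (f : Polynomial ℂ) {x : ℂ} (hx : x ≠ 0) :
    f.reverse.eval x = f.eval x⁻¹ * x ^ f.natDegree := by
  have hxi : x⁻¹ ≠ 0 := inv_ne_zero hx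
  letI : Invertible (x⁻¹) := invertibleOfNonzero hxi
  have h := Polynomial.eval₂_reverse_mul_pow (RingHom.id ℂ) (x⁻¹) f
  rw [invOf_eq_inv, inv_inv] at h
  simp only [eval₂_eq_eval_map, Polynomial.map_id] at h
  field_simp at h ⊢
  rw [← h, mul_assoc, ← mul_pow, one_div, inv_mul_cancel₀ hx, one_pow, mul_one]

/-- The divisibility argument of §8.2: if `Ξ(q^{-s})·D(q^s) = Ξ(q^s)·D(q^{-s})` for all
`s ∈ ℂ`, `D(0) ≠ 0`, `Ξ(0) = c·D(0)`, and for all sufficiently large `m` the polynomial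
`X^m·D(1/X)` (i.e. `X^{m - deg D}·reverse(D)`) is coprime to `D`, then `Ξ = c·D`. -/
theorem stmt_14 (Ξ D : Polynomial ℂ) (q : ℝ) (hq : 1 < q) (c : ℂ)
    (hD0 : D.eval 0 ≠ 0)
    (hfe : ∀ s : ℂ, Ξ.eval ((q : ℂ) ^ (-s)) * D.eval ((q : ℂ) ^ s) =
        Ξ.eval ((q : ℂ) ^ s) * D.eval ((q : ℂ) ^ (-s)))
    (hc : Ξ.eval 0 = c * D.eval 0)
    (hcop : ∃ M : ℕ, ∀ m : ℕ, M ≤ m →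
      IsCoprime ((Polynomial.X : Polynomial ℂ) ^ (m - D.natDegree) * D.reverse) D) :
    Ξ = Polynomial.C c * D := by
  obtain ⟨M, hM⟩ := hcop
  have hD : D ≠ 0 := fun h => hD0 (by simp [h])
  by_cases hΞ : Ξ = 0
  · have hc0 : c = 0 := by
      rw [hΞ] at hc; simpa [hD0, eq_comm] using hc
    simp [hΞ, hc0]
  set m := M + Ξ.natDegree + D.natDegree with hm
  have hmM : M ≤ m := by omega
  have hmΞ : Ξ.natDegree ≤ m := by omega
  have hmD : D.natDegree ≤ m := by omega
  set P : Polynomial ℂ := X ^ (m - Ξ.natDegree) * Ξ.reverse * D with hP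
  set Q : Polynomial ℂ := Ξ * (X ^ (m - D.natDegree) * D.reverse) with hQ
  have hq0 : (0:ℝ) < q := lt_trans one_pos hq
  have hPQ : P = Q := by
    apply Polynomial.eq_of_infinite_eval_eq
    have hmono : StrictMono (fun t : ℝ => q ^ t) :=
      fun a b h => (Real.rpow_lt_rpow_left_iff hq).mpr h
    have hinj : Function.Injective (fun t : ℝ => ((q ^ t : ℝ) : ℂ)) :=
      fun a b hab => hmono.injective (Complex.ofReal_injective hab)
    apply Set.Infinite.mono _ (Set.infinite_range_of_injective hinj)
    rintro x ⟨t, rfl⟩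
    have hx : ((q ^ t : ℝ) : ℂ) ≠ 0 := by
      simp only [ne_eq, Complex.ofReal_eq_zero]
      positivity
    set x : ℂ := ((q ^ t : ℝ) : ℂ) with hxdef
    have hcp : x = (q : ℂ) ^ (t : ℂ) := Complex.ofReal_cpow hq0.le t
    have hni : (q : ℂ) ^ (-(t : ℂ)) = x⁻¹ := by
      rw [Complex.cpow_neg, ← hcp]
    have hfe' : Ξ.eval x⁻¹ * D.eval x = Ξ.eval x * D.eval x⁻¹ := by
      have := hfe (t : ℂ)
      rwa [hni, ← hcp] at this
    show P.eval x = Q.eval x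
    rw [hP, hQ]
    simp only [eval_mul, eval_pow, eval_X]
    rw [eval_reverse_aux Ξ hx, eval_reverse_aux D hx]
    have e1 : x ^ (m - Ξ.natDegree) * x ^ Ξ.natDegree = x ^ m := by
      rw [← pow_add, Nat.sub_add_cancel hmΞ]
    have e2 : x ^ (m - D.natDegree) * x ^ D.natDegree = x ^ m := by
      rw [← pow_add, Nat.sub_add_cancel hmD]
    calc x ^ (m - Ξ.natDegree) * (Ξ.eval x⁻¹ * x ^ Ξ.natDegree) * D.eval x
        = (x ^ (m - Ξ.natDegree) * x ^ Ξ.natDegree) * (Ξ.eval x⁻¹ * D.eval x) := by ring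
      _ = x ^ m * (Ξ.eval x * D.eval x⁻¹) := by rw [e1, hfe']
      _ = Ξ.eval x * (x ^ (m - D.natDegree) * (D.eval x⁻¹ * x ^ D.natDegree)) := by
          rw [← e2]; ring
  -- divisibility
  have hco := hM m hmM
  have hdvd : D ∣ Ξ := by
    refine hco.symm.dvd_of_dvd_mul_right ?_
    rw [← hQ, ← hPQ, hP]
    exact ⟨X ^ (m - Ξ.natDegree) * Ξ.reverse, by ring⟩
  -- degree comparison
  have hrevΞ : Ξ.reverse ≠ 0 := by rwa [ne_eq, Polynomial.reverse_eq_zero]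
  have hrevD : D.reverse ≠ 0 := by rwa [ne_eq, Polynomial.reverse_eq_zero]
  have hdegP : P.natDegree = (m - Ξ.natDegree) + Ξ.reverse.natDegree + D.natDegree := by
    rw [hP, natDegree_mul (mul_ne_zero (pow_ne_zero _ X_ne_zero) hrevΞ) hD,
      natDegree_mul (pow_ne_zero _ X_ne_zero) hrevΞ, natDegree_X_pow]
  have hdegQ : Q.natDegree = Ξ.natDegree + ((m - D.natDegree) + D.reverse.natDegree) := by
    rw [hQ, natDegree_mul hΞ (mul_ne_zero (pow_ne_zero _ X_ne_zero) hrevD),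
      natDegree_mul (pow_ne_zero _ X_ne_zero) hrevD, natDegree_X_pow]
  have htrD : D.natTrailingDegree = 0 :=
    Polynomial.natTrailingDegree_eq_zero.mpr
      (Or.inr (by rwa [Polynomial.coeff_zero_eq_eval_zero]))
  have h1 := Polynomial.natDegree_eq_reverse_natDegree_add_natTrailingDegree Ξ
  have h2 := Polynomial.natDegree_eq_reverse_natDegree_add_natTrailingDegree D
  have hdeg : Ξ.natDegree ≤ D.natDegree := by
    have := hPQ ▸ hdegP
    rw [hdegQ] at this
    omega
  obtain ⟨E, hE⟩ := hdvd
  have hE0 : E ≠ 0 := fun h => hΞ (by rw [hE, h, mul_zero])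
  have hdegE : E.natDegree = 0 := by
    have := Polynomial.natDegree_mul hD hE0
    rw [← hE] at this
    omega
  obtain ⟨e, rfl⟩ := Polynomial.natDegree_eq_zero.mp hdegE
  have hec : e = c := by
    have : D.eval 0 * e = c * D.eval 0 := by
      rw [← hc, hE]; simp
    field_simp at this
    exact this
  rw [hE, hec, mul_comm]
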